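/- Let D be a nonempty type of documents, K a positive natural number, and model rankings as functions y : Fin K → D. Suppose two click models both satisfy the examination hypothesis with the SAME click prediction function c: for i ∈ {1,2} there are rᵢ : D → ℝ and oᵢ : (Fin K → D) → Fin K → ℝ with c(y)(k) = rᵢ(y(k)) * oᵢ(y)(k) for every ranking y and position k, where rᵢ(d) > 0 for all documents d and oᵢ(y)(k) > 0 for all rankings y and positions k. Assume moreover that for every pair of documents d₁, d₂ there exist rankings y₁, y₂ with y₁(0) = d₁, y₂(0) = d₂, y₁(k) = y₂(k) for all k ≠ 0, and oᵢ(y₁)(0) = oᵢ(y₂)(0) for both i = 1 and i = 2. Then the two relevance functions are proportional: there exists λ > 0 such that r₂(d) = λ * r₁(d) for every document d. -/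
import Mathlib

/-- **Relevance scores are determined up to a positive constant.**
If two examination-hypothesis click models share the same click prediction
function `c`, with positive relevance scores and positive examination factors,
and for every pair of documents there exist rankings differing only in the
first position with equal examination probabilities at the first position
(for both models), then the two relevance functions are proportional. -/
theorem examination_hypothesis_relevance_unique_up_to_constant
    {D : Type*} [Nonempty D] {K : ℕ} (hK : 0 < K)
    (c : (Fin K → D) → Fin K → ℝ)
    (r₁ r₂ : D → ℝ) (o₁ o₂ : (Fin K → D) → Fin K → ℝ)
    (hEH₁ : ∀ (y : Fin K → D) (k : Fin K), c y k = r₁ (y k) * o₁ y k)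
    (hEH₂ : ∀ (y : Fin K → D) (k : Fin K), c y k = r₂ (y k) * o₂ y k)
    (hr₁ : ∀ d, 0 < r₁ d) (hr₂ : ∀ d, 0 < r₂ d)
    (ho₁ : ∀ (y : Fin K → D) (k : Fin K), 0 < o₁ y k)
    (ho₂ : ∀ (y : Fin K → D) (k : Fin K), 0 < o₂ y k)
    (hpair : ∀ d₁ d₂ : D, ∃ y₁ y₂ : Fin K → D,
      y₁ ⟨0, hK⟩ = d₁ ∧ y₂ ⟨0, hK⟩ = d₂ ∧
      (∀ k : Fin K, k ≠ ⟨0, hK⟩ → y₁ k = y₂ k) ∧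
      o₁ y₁ ⟨0, hK⟩ = o₁ y₂ ⟨0, hK⟩ ∧ o₂ y₁ ⟨0, hK⟩ = o₂ y₂ ⟨0, hK⟩) :
    ∃ lam : ℝ, 0 < lam ∧ ∀ d : D, r₂ d = lam * r₁ d := by
  obtain ⟨d₀⟩ := ‹Nonempty D›
  refine ⟨r₂ d₀ / r₁ d₀, div_pos (hr₂ d₀) (hr₁ d₀), fun d => ?_⟩
  obtain ⟨y₁, y₂, h1, h2, _, ho1, ho2⟩ := hpair d d₀
  have e1 := hEH₁ y₁ ⟨0, hK⟩
  have e2 := hEH₁ y₂ ⟨0, hK⟩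
  have e3 := hEH₂ y₁ ⟨0, hK⟩
  have e4 := hEH₂ y₂ ⟨0, hK⟩
  rw [h1] at e1 e3
  rw [h2] at e2 e4
  rw [← ho1] at e2
  rw [← ho2] at e4
  have hO1 := (ho₁ y₁ ⟨0, hK⟩).ne'
  have hO2 := (ho₂ y₁ ⟨0, hK⟩).ne'
  have hr10 := (hr₁ d₀).ne'
  -- r₁ d * o₁ = c y₁, r₁ d₀ * o₁ = c y₂, r₂ d * o₂ = c y₁, r₂ d₀ * o₂ = c y₂
  have key : r₂ d * r₁ d₀ = r₂ d₀ * r₁ d := by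
    have h5 : r₁ d * o₁ y₁ ⟨0, hK⟩ * (r₂ d₀ * o₂ y₁ ⟨0, hK⟩)
        = r₁ d₀ * o₁ y₁ ⟨0, hK⟩ * (r₂ d * o₂ y₁ ⟨0, hK⟩) := by
      rw [← e1, ← e2, ← e3, ← e4]; ring
    have h6 : (r₂ d * r₁ d₀) * (o₁ y₁ ⟨0, hK⟩ * o₂ y₁ ⟨0, hK⟩)
        = (r₂ d₀ * r₁ d) * (o₁ y₁ ⟨0, hK⟩ * o₂ y₁ ⟨0, hK⟩) := by
      linear_combination -h5
    exact mul_right_cancel₀ (mul_ne_zero hO1 hO2) h6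
  field_simp
  linarith [key]
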